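/- Let K ⊂ ℝⁿ be compact and f : K → ℝⁿ 1-Lipschitz. If for every x ∉ K there exists p_x ∈ ℝⁿ with |p_x - f(y)| < |x - y| for all y ∈ K, then f admits a 1-Lipschitz extension h : ℝⁿ → ℝⁿ such that h|_K = f and Lip(h|_A) < 1 for every compact set A ⊂ ℝⁿ \ K. -/

import Mathlib

open Set Finset Metric RealInnerProductSpace Filter Topology

variable {E : Type*} [NormedAddCommGroup E] [InnerProductSpace ℝ E]

private lemma sq_norm_ident (P : Finset E) (w : E → ℝ) (v : E → E) (hw : ∑ y ∈ P, w y = 1) :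
    ∑ y ∈ P, ∑ z ∈ P, w y * w z * ‖v y - v z‖ ^ 2
      = 2 * (∑ y ∈ P, w y * ‖v y‖ ^ 2) - 2 * ‖∑ y ∈ P, w y • v y‖ ^ 2 := by
  have expand : ∀ y ∈ P, ∀ z ∈ P, w y * w z * ‖v y - v z‖ ^ 2
      = w y * w z * ‖v y‖ ^ 2 + w y * w z * ‖v z‖ ^ 2
        - 2 * ⟪w y • v y, w z • v z⟫ := by
    intro y _ z _
    rw [@norm_sub_sq_real E, real_inner_smul_left, real_inner_smul_right]
    ring
  rw [Finset.sum_congr rfl fun y hy => Finset.sum_congr rfl fun z hz => expand y hy z hz]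
  have h3 : ∀ y ∈ P, ∑ z ∈ P, (w y * w z * ‖v y‖ ^ 2 + w y * w z * ‖v z‖ ^ 2
      - 2 * ⟪w y • v y, w z • v z⟫)
      = w y * ‖v y‖ ^ 2 + w y * (∑ z ∈ P, w z * ‖v z‖ ^ 2)
        - 2 * ⟪w y • v y, ∑ z ∈ P, w z • v z⟫ := by
    intro y _
    have h3a : ∑ z ∈ P, w y * w z * ‖v y‖ ^ 2 = w y * ‖v y‖ ^ 2 := by
      have : ∑ z ∈ P, w y * w z * ‖v y‖ ^ 2 = (w y * ‖v y‖ ^ 2) * ∑ z ∈ P, w z := by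
        rw [Finset.mul_sum]; exact Finset.sum_congr rfl fun z _ => by ring
      rw [this, hw, mul_one]
    have h3b : ∑ z ∈ P, w y * w z * ‖v z‖ ^ 2 = w y * ∑ z ∈ P, w z * ‖v z‖ ^ 2 := by
      rw [Finset.mul_sum]; exact Finset.sum_congr rfl fun z _ => by ring
    have h3c : ∑ z ∈ P, 2 * ⟪w y • v y, w z • v z⟫
        = 2 * ⟪w y • v y, ∑ z ∈ P, w z • v z⟫ := by
      rw [inner_sum, Finset.mul_sum]
    rw [Finset.sum_sub_distrib, Finset.sum_add_distrib, h3a, h3b, h3c]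
  rw [Finset.sum_congr rfl h3, Finset.sum_sub_distrib, Finset.sum_add_distrib,
    ← Finset.sum_mul, hw, one_mul, ← Finset.mul_sum]
  have h4 : ∑ y ∈ P, ⟪w y • v y, ∑ z ∈ P, w z • v z⟫
      = ‖∑ y ∈ P, w y • v y‖ ^ 2 := by
    rw [← sum_inner, real_inner_self_eq_norm_sq]
  rw [h4]; ring

set_option maxHeartbeats 1000000 in
private lemma kirs_finite [FiniteDimensional ℝ E] (S : Finset E) (φ : E → E)
    (hφ : ∀ a ∈ S, ∀ b ∈ S, ‖φ a - φ b‖ ≤ ‖a - b‖) (x : E) :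
    ∃ q : E, ∀ a ∈ S, ‖q - φ a‖ ≤ ‖x - a‖ := by
  classical
  rcases S.eq_empty_or_nonempty with rfl | hS
  · exact ⟨x, by simp⟩
  obtain ⟨a₀, ha₀⟩ := id hS
  set F : E → ℝ := fun q => S.sup' hS fun a => ‖q - φ a‖ ^ 2 - ‖x - a‖ ^ 2 with hFdef
  have Fcont : Continuous F := by
    rw [continuous_iff_continuousAt]
    intro q
    exact ContinuousAt.finset_sup'_apply hS fun a _ =>
      (Continuous.continuousAt (by fun_prop))
  -- min of F exists
  have hM0 : -‖x - a₀‖ ^ 2 ≤ F (φ a₀) := by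
    have h := Finset.le_sup' (fun a => ‖φ a₀ - φ a‖ ^ 2 - ‖x - a‖ ^ 2) ha₀
    calc -‖x - a₀‖ ^ 2 = ‖φ a₀ - φ a₀‖ ^ 2 - ‖x - a₀‖ ^ 2 := by simp
      _ ≤ F (φ a₀) := h
  set M0 := F (φ a₀) with hM0def
  set R := Real.sqrt (M0 + ‖x - a₀‖ ^ 2 + 1) with hRdef
  have hRnn : 0 ≤ R := Real.sqrt_nonneg _
  have hRsq : R ^ 2 = M0 + ‖x - a₀‖ ^ 2 + 1 := Real.sq_sqrt (by nlinarith)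
  obtain ⟨q0, hq0B, hq0min⟩ := (isCompact_closedBall (φ a₀) R).exists_isMinOn
    ⟨φ a₀, mem_closedBall_self hRnn⟩ Fcont.continuousOn
  have hglobal : ∀ q, F q0 ≤ F q := by
    intro q
    by_cases hq : q ∈ closedBall (φ a₀) R
    · exact hq0min hq
    · have h1 : R < ‖q - φ a₀‖ := by
        rw [mem_closedBall, dist_eq_norm] at hq; linarith [not_le.1 hq]
      have h2 : R ^ 2 ≤ ‖q - φ a₀‖ ^ 2 := by nlinarith [norm_nonneg (q - φ a₀)]
      have h3 : ‖q - φ a₀‖ ^ 2 - ‖x - a₀‖ ^ 2 ≤ F q :=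
        Finset.le_sup' (fun a => ‖q - φ a‖ ^ 2 - ‖x - a‖ ^ 2) ha₀
      have h4 : F q0 ≤ M0 := hq0min (mem_closedBall_self hRnn)
      nlinarith
  set m := F q0 with hmdef
  by_cases hm : m ≤ 0
  · refine ⟨q0, fun a ha => ?_⟩
    have h2 : ‖q0 - φ a‖ ^ 2 - ‖x - a‖ ^ 2 ≤ m :=
      Finset.le_sup' (fun a => ‖q0 - φ a‖ ^ 2 - ‖x - a‖ ^ 2) ha
    have h3 : ‖q0 - φ a‖ ^ 2 ≤ ‖x - a‖ ^ 2 := by linarith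
    have := Real.sqrt_le_sqrt h3
    rwa [Real.sqrt_sq (norm_nonneg _), Real.sqrt_sq (norm_nonneg _)] at this
  push_neg at hm
  exfalso
  set T := S.filter (fun a => ‖q0 - φ a‖ ^ 2 - ‖x - a‖ ^ 2 = m) with hTdef
  have hTsub : T ⊆ S := Finset.filter_subset _ _
  have hT : T.Nonempty := by
    obtain ⟨aT, haT, hsup⟩ := S.exists_mem_eq_sup' hS (fun a => ‖q0 - φ a‖ ^ 2 - ‖x - a‖ ^ 2)
    exact ⟨aT, Finset.mem_filter.2 ⟨haT, hsup.symm⟩⟩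
  have hq0hull : q0 ∈ convexHull ℝ ((T.image φ : Finset E) : Set E) := by
    by_contra hq0hull
    set D := convexHull ℝ ((T.image φ : Finset E) : Set E) with hDdef
    have hDconv : Convex ℝ D := convex_convexHull _ _
    have hDcompact : IsCompact D := (T.image φ).finite_toSet.isCompact_convexHull ℝ
    have hDne : D.Nonempty := by
      obtain ⟨aT, haT⟩ := hT
      exact ⟨φ aT, subset_convexHull _ _ (Finset.mem_coe.2 (Finset.mem_image_of_mem φ haT))⟩
    obtain ⟨P, hPD, hPproj⟩ :=
      exists_norm_eq_iInf_of_complete_convex hDne (hDcompact.isClosed.isComplete) hDconv q0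
    have hP := (norm_eq_iInf_iff_real_inner_le_zero hDconv hPD).1 hPproj
    set d := q0 - P with hddef
    have hd : d ≠ 0 := sub_ne_zero.2 fun h => hq0hull (h ▸ hPD)
    have hdpos : 0 < ‖d‖ ^ 2 := pow_pos (norm_pos_iff.2 hd) 2
    have key : ∀ a ∈ T, ‖d‖ ^ 2 ≤ ⟪d, q0 - φ a⟫ := by
      intro a ha
      have h1 : ⟪q0 - P, φ a - P⟫ ≤ 0 := by
        refine hP _ (subset_convexHull _ _ ?_)
        simp only [Finset.coe_image, Set.mem_image, Finset.mem_coe]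
        exact ⟨a, ha, rfl⟩
      have h0 : q0 - φ a = (q0 - P) - (φ a - P) := by abel
      have h2 : ⟪d, q0 - φ a⟫ = ‖d‖ ^ 2 - ⟪q0 - P, φ a - P⟫ := by
        rw [hddef, h0, inner_sub_right, real_inner_self_eq_norm_sq]
      linarith
    set I := S.filter (fun a => ¬ (‖q0 - φ a‖ ^ 2 - ‖x - a‖ ^ 2 = m)) with hIdef
    have hev : ∀ᶠ t in nhds (0 : ℝ), ∀ a ∈ I, ‖(q0 - t • d) - φ a‖ ^ 2 - ‖x - a‖ ^ 2 < m := by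
      rw [Filter.eventually_all_finset]
      intro a ha
      have h1 : ‖q0 - φ a‖ ^ 2 - ‖x - a‖ ^ 2 < m := by
        have hle : ‖q0 - φ a‖ ^ 2 - ‖x - a‖ ^ 2 ≤ m :=
          Finset.le_sup' (fun a => ‖q0 - φ a‖ ^ 2 - ‖x - a‖ ^ 2) (Finset.mem_filter.1 ha).1
        exact lt_of_le_of_ne hle (Finset.mem_filter.1 ha).2
      have hcont : Continuous fun t : ℝ => ‖(q0 - t • d) - φ a‖ ^ 2 - ‖x - a‖ ^ 2 := by
        fun_prop
      have htend : Filter.Tendsto (fun t : ℝ => ‖(q0 - t • d) - φ a‖ ^ 2 - ‖x - a‖ ^ 2)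
          (nhds 0) (nhds (‖q0 - φ a‖ ^ 2 - ‖x - a‖ ^ 2)) := by
        have := hcont.tendsto (0 : ℝ)
        simpa using this
      exact htend.eventually_lt_const h1
    obtain ⟨ε, hε, hball⟩ := Metric.eventually_nhds_iff.1 hev
    set t := min (ε / 2) 1 with htdef
    have ht : 0 < t := lt_min (by linarith) one_pos
    have ht1 : t ≤ 1 := min_le_right _ _
    have htε : dist t 0 < ε := by
      rw [Real.dist_eq, sub_zero, abs_of_pos ht]
      calc t ≤ ε / 2 := min_le_left _ _
        _ < ε := by linarith
    have hlt : F (q0 - t • d) < m := by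
      apply (Finset.sup'_lt_iff hS).2
      intro a ha
      by_cases haT : ‖q0 - φ a‖ ^ 2 - ‖x - a‖ ^ 2 = m
      · -- active
        have hkey := key a (Finset.mem_filter.2 ⟨ha, haT⟩)
        have h0 : (q0 - t • d) - φ a = (q0 - φ a) - t • d := by abel
        have hexp : ‖(q0 - t • d) - φ a‖ ^ 2
            = ‖q0 - φ a‖ ^ 2 - 2 * t * ⟪d, q0 - φ a⟫ + t ^ 2 * ‖d‖ ^ 2 := by
          rw [h0, @norm_sub_sq_real, real_inner_smul_right, norm_smul, Real.norm_eq_abs,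
            mul_pow, sq_abs, real_inner_comm]
          ring
        have h5 : t ^ 2 ≤ t := by nlinarith [ht.le, ht1]
        have h6 : t ^ 2 * ‖d‖ ^ 2 ≤ t * ‖d‖ ^ 2 := mul_le_mul_of_nonneg_right h5 hdpos.le
        have h7 : 2 * t * ‖d‖ ^ 2 ≤ 2 * t * ⟪d, q0 - φ a⟫ := by nlinarith
        have h8 : 0 < t * ‖d‖ ^ 2 := mul_pos ht hdpos
        rw [hexp, ← haT]
        linarith
      · -- inactive
        exact hball htε a (Finset.mem_filter.2 ⟨ha, haT⟩)
    exact absurd (hglobal (q0 - t • d)) (not_le.2 hlt)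
  -- final computation
  rw [Finset.mem_convexHull'] at hq0hull
  obtain ⟨w, hw0, hw1, hwq⟩ := hq0hull
  set P := T.image φ with hPdef
  have hpre : ∀ y ∈ P, ∃ a, a ∈ T ∧ φ a = y := by
    intro y hy
    simpa using Finset.mem_image.1 hy
  set z : E → E := fun y => if h : ∃ a, a ∈ T ∧ φ a = y then h.choose else 0 with hzdef
  have hz : ∀ y ∈ P, z y ∈ T ∧ φ (z y) = y := by
    intro y hy
    have h := hpre y hy
    simp only [hzdef, dif_pos h]
    exact h.choose_spec
  have Id1 := sq_norm_ident P w (fun y => q0 - y) hw1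
  have Id2 := sq_norm_ident P w (fun y => x - z y) hw1
  have hzero : ∑ y ∈ P, w y • (q0 - y) = 0 := by
    have : ∑ y ∈ P, w y • (q0 - y) = (∑ y ∈ P, w y) • q0 - ∑ y ∈ P, w y • y := by
      rw [Finset.sum_smul, ← Finset.sum_sub_distrib]
      exact Finset.sum_congr rfl fun y _ => smul_sub _ _ _
    rw [this, hw1, one_smul, hwq, sub_self]
  rw [hzero, norm_zero] at Id1
  -- termwise comparison
  have hcomp : ∑ y ∈ P, ∑ y' ∈ P, w y * w y' * ‖(q0 - y) - (q0 - y')‖ ^ 2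
      ≤ ∑ y ∈ P, ∑ y' ∈ P, w y * w y' * ‖(x - z y) - (x - z y')‖ ^ 2 := by
    refine Finset.sum_le_sum fun y hy => Finset.sum_le_sum fun y' hy' => ?_
    have h1 : (q0 - y) - (q0 - y') = y' - y := by abel
    have h2 : (x - z y) - (x - z y') = z y' - z y := by abel
    rw [h1, h2]
    have hzy := hz y hy
    have hzy' := hz y' hy'
    have h3 : ‖y' - y‖ ≤ ‖z y' - z y‖ := by
      calc ‖y' - y‖ = ‖φ (z y') - φ (z y)‖ := by rw [hzy.2, hzy'.2]
        _ ≤ ‖z y' - z y‖ := hφ _ (hTsub hzy'.1) _ (hTsub hzy.1)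
    have h4 : ‖y' - y‖ ^ 2 ≤ ‖z y' - z y‖ ^ 2 := by nlinarith [norm_nonneg (y' - y)]
    have h5 : 0 ≤ w y * w y' := mul_nonneg (hw0 y hy) (hw0 y' hy')
    nlinarith
  have hactive : ∀ y ∈ P, ‖q0 - y‖ ^ 2 = ‖x - z y‖ ^ 2 + m := by
    intro y hy
    have hzy := hz y hy
    have := (Finset.mem_filter.1 hzy.1).2
    rw [hzy.2] at this
    linarith
  have hA : ∑ y ∈ P, w y * ‖q0 - y‖ ^ 2 = (∑ y ∈ P, w y * ‖x - z y‖ ^ 2) + m := by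
    have : ∀ y ∈ P, w y * ‖q0 - y‖ ^ 2 = w y * ‖x - z y‖ ^ 2 + w y * m := by
      intro y hy; rw [hactive y hy]; ring
    rw [Finset.sum_congr rfl this, Finset.sum_add_distrib, ← Finset.sum_mul, hw1, one_mul]
  have hnn : 0 ≤ ‖∑ y ∈ P, w y • (x - z y)‖ ^ 2 := by positivity
  rw [Id1, Id2] at hcomp
  rw [hA] at hcomp
  nlinarith

/-- One-point extension over an arbitrary nonempty domain. -/
private lemma kirs_onepoint [FiniteDimensional ℝ E] {s : Set E} (hs : s.Nonempty)
    (g : E → E) (hg : ∀ a ∈ s, ∀ b ∈ s, ‖g a - g b‖ ≤ ‖a - b‖) (x : E) :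
    ∃ q : E, ∀ y ∈ s, ‖q - g y‖ ≤ ‖x - y‖ := by
  classical
  obtain ⟨y₀, hy₀⟩ := hs
  set t : s → Set E := fun y => closedBall (g y) ‖x - (y : E)‖ with htdef
  have htc : ∀ y : s, IsClosed (t y) := fun y => Metric.isClosed_closedBall
  have hb : IsCompact (closedBall (g y₀) ‖x - y₀‖) := isCompact_closedBall _ _
  by_cases hne : (closedBall (g y₀) ‖x - y₀‖ ∩ ⋂ y : s, t y).Nonempty
  · obtain ⟨q, hq1, hq2⟩ := hne
    refine ⟨q, fun y hy => ?_⟩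
    have := Set.mem_iInter.1 hq2 ⟨y, hy⟩
    rw [htdef] at this
    simpa [mem_closedBall, dist_eq_norm] using this
  · exfalso
    rw [Set.not_nonempty_iff_eq_empty] at hne
    obtain ⟨u, hu⟩ := hb.elim_finite_subfamily_closed t htc hne
    set S : Finset E := insert y₀ (u.image Subtype.val) with hSdef
    have hSsub : ∀ a ∈ S, a ∈ s := by
      intro a ha
      rcases Finset.mem_insert.1 ha with rfl | h
      · exact hy₀
      · obtain ⟨y, _, rfl⟩ := Finset.mem_image.1 h
        exact y.2
    obtain ⟨q, hq⟩ := kirs_finite S g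
      (fun a ha b hb => hg a (hSsub a ha) b (hSsub b hb)) x
    apply Set.eq_empty_iff_forall_notMem.1 hu q
    constructor
    · have := hq y₀ (Finset.mem_insert_self _ _)
      simpa [mem_closedBall, dist_eq_norm] using this
    · refine Set.mem_iInter₂.2 fun y hy => ?_
      have hymem : (y : E) ∈ S := Finset.mem_insert_of_mem (Finset.mem_image_of_mem Subtype.val hy)
      have := hq _ hymem
      simpa [htdef, mem_closedBall, dist_eq_norm] using this

/-- Kirszbraun's theorem for finite-dimensional real inner product spaces. -/
private lemma kirszbraun [FiniteDimensional ℝ E] {s : Set E} (hs : s.Nonempty) {f : E → E}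
    (hf : ∀ a ∈ s, ∀ b ∈ s, ‖f a - f b‖ ≤ ‖a - b‖) :
    ∃ g : E → E, (∀ a b, ‖g a - g b‖ ≤ ‖a - b‖) ∧ Set.EqOn g f s := by
  classical
  set G₀ : Set (E × E) := (fun y => (y, f y)) '' s with hG₀def
  set 𝒮 : Set (Set (E × E)) :=
    {G | G₀ ⊆ G ∧ ∀ p ∈ G, ∀ q ∈ G, ‖p.2 - q.2‖ ≤ ‖p.1 - q.1‖} with h𝒮def
  have hG₀mem : G₀ ∈ 𝒮 := by
    refine ⟨Set.Subset.rfl, ?_⟩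
    rintro p ⟨a, ha, rfl⟩ q ⟨b, hb, rfl⟩
    exact hf a ha b hb
  obtain ⟨M, hM0, hMmax⟩ := zorn_subset_nonempty 𝒮 (fun c hc hchain hcne => by
    obtain ⟨c₀, hc₀⟩ := hcne
    refine ⟨⋃₀ c, ⟨?_, ?_⟩, fun G hG => Set.subset_sUnion_of_mem hG⟩
    · exact Set.Subset.trans (hc hc₀).1 (Set.subset_sUnion_of_mem hc₀)
    · rintro p hp q hq
      obtain ⟨Gp, hGp, hpGp⟩ := hp
      obtain ⟨Gq, hGq, hqGq⟩ := hq
      rcases hchain.total hGp hGq with h | h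
      · exact (hc hGq).2 p (h hpGp) q hqGq
      · exact (hc hGp).2 p hpGp q (h hqGq)) G₀ hG₀mem
  have hMS := hMmax.prop
  have hMtotal : ∀ x : E, ∃ y, (x, y) ∈ M := by
    intro x
    by_contra hx
    push_neg at hx
    -- the partial map defined by M
    set dom : Set E := Prod.fst '' M with hdomdef
    have hdomne : dom.Nonempty := by
      obtain ⟨y₀, hy₀⟩ := hs
      exact ⟨y₀, ⟨(y₀, f y₀), hMS.1 ⟨y₀, hy₀, rfl⟩, rfl⟩⟩
    set gM : E → E := fun a => if h : ∃ b, (a, b) ∈ M then h.choose else 0 with hgMdef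
    have hgM : ∀ a ∈ dom, (a, gM a) ∈ M := by
      rintro a ⟨p, hp, rfl⟩
      have h : ∃ b, (p.1, b) ∈ M := ⟨p.2, hp⟩
      simp only [hgMdef, dif_pos h]
      exact h.choose_spec
    have hgMlip : ∀ a ∈ dom, ∀ b ∈ dom, ‖gM a - gM b‖ ≤ ‖a - b‖ := by
      intro a ha b hb
      exact hMS.2 _ (hgM a ha) _ (hgM b hb)
    obtain ⟨q, hq⟩ := kirs_onepoint hdomne gM hgMlip x
    have funq : ∀ r ∈ M, r.2 = gM r.1 := by
      intro r hr
      have hr1 : r.1 ∈ dom := ⟨r, hr, rfl⟩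
      have h0 := hMS.2 r hr _ (hgM r.1 hr1)
      simp only [sub_self, norm_zero] at h0
      exact sub_eq_zero.1 (norm_eq_zero.1 (le_antisymm h0 (norm_nonneg _)))
    have hM' : insert (x, q) M ∈ 𝒮 := by
      constructor
      · exact Set.Subset.trans hMS.1 (Set.subset_insert _ _)
      · rintro p hp r hr
        rcases Set.mem_insert_iff.1 hp with rfl | hp <;>
          rcases Set.mem_insert_iff.1 hr with h | hr
        · rw [h]; simp
        · -- p = (x,q), r ∈ M
          have hr1 : r.1 ∈ dom := ⟨r, hr, rfl⟩
          have h2 := funq r hr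
          show ‖q - r.2‖ ≤ ‖x - r.1‖
          rw [h2]
          exact hq r.1 hr1
        · -- p ∈ M, r = (x,q)
          have hp1 : p.1 ∈ dom := ⟨p, hp, rfl⟩
          have h2 := funq p hp
          rw [h]
          show ‖p.2 - q‖ ≤ ‖p.1 - x‖
          rw [h2]
          calc ‖gM p.1 - q‖ = ‖q - gM p.1‖ := norm_sub_rev _ _
            _ ≤ ‖x - p.1‖ := hq p.1 hp1
            _ = ‖p.1 - x‖ := norm_sub_rev _ _
        · exact hMS.2 p hp r hr
    have hne : (x, q) ∉ M := fun h => hx q h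
    have := hMmax.eq_of_subset hM' (Set.subset_insert _ _)
    exact hne (this ▸ Set.mem_insert (x, q) M)
  choose gfun hgfun using hMtotal
  refine ⟨gfun, fun a b => hMS.2 _ (hgfun a) _ (hgfun b), fun y hy => ?_⟩
  have h1 : (y, f y) ∈ M := hMS.1 ⟨y, hy, rfl⟩
  have h0 := hMS.2 _ (hgfun y) _ h1
  simp only [sub_self, norm_zero] at h0
  exact sub_eq_zero.1 (norm_eq_zero.1 (le_antisymm h0 (norm_nonneg _)))

private lemma ball_ext [FiniteDimensional ℝ E] {K : Set E} (hK : IsCompact K) (hKne : K.Nonempty)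
    {f : E → E} (hfp : ∀ a ∈ K, ∀ b ∈ K, ‖f a - f b‖ ≤ ‖a - b‖) (hfc : ContinuousOn f K)
    {x : E} (p : E) (hp : ∀ y ∈ K, ‖p - f y‖ < ‖x - y‖) :
    ∃ r > 0, ∃ H : E → E, (∀ a b, ‖H a - H b‖ ≤ ‖a - b‖) ∧ Set.EqOn H f K ∧
      ∀ z ∈ closedBall x r, H z = p := by
  classical
  set u : E → ℝ := fun y => ‖x - y‖ - ‖p - f y‖ with hudef
  have hucont : ContinuousOn u K := by
    apply ContinuousOn.sub
    · exact (continuous_const.sub continuous_id).norm.continuousOn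
    · exact ((continuousOn_const.sub hfc)).norm
  obtain ⟨ym, hym, hmin⟩ := hK.exists_isMinOn hKne hucont
  set ε := u ym with hεdef
  have hε : 0 < ε := by
    have := hp ym hym
    simp only [hεdef, hudef]
    linarith
  have hεu : ∀ y ∈ K, ε ≤ u y := fun y hy => by rw [hεdef]; exact hmin hy
  clear_value ε
  have hub : ∀ z ∈ closedBall x (ε / 2), ∀ y ∈ K, ‖p - f y‖ ≤ ‖z - y‖ - ε / 2 := by
    intro z hz y hy
    have h1 : ε ≤ u y := hεu y hy
    have h2 : ‖x - y‖ ≤ ‖x - z‖ + ‖z - y‖ := by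
      have := norm_sub_le_norm_sub_add_norm_sub x z y
      linarith [norm_add_le (x - z) (z - y)]
    have h3 : ‖x - z‖ ≤ ε / 2 := by
      rw [mem_closedBall, dist_eq_norm] at hz
      rwa [norm_sub_rev]
    simp only [hudef] at h1
    linarith
  have hdisj : ∀ z ∈ closedBall x (ε / 2), z ∉ K := by
    intro z hz hzK
    have := hub z hz z hzK
    simp only [sub_self, norm_zero] at this
    have := norm_nonneg (p - f z)
    linarith
  set s : Set E := K ∪ closedBall x (ε / 2) with hsdef
  set g : E → E := fun w => if w ∈ K then f w else p with hgdef
  have hglip : ∀ a ∈ s, ∀ b ∈ s, ‖g a - g b‖ ≤ ‖a - b‖ := by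
    intro a ha b hb
    rcases ha with haK | haB <;> rcases hb with hbK | hbB
    · simp only [hgdef, if_pos haK, if_pos hbK]
      exact hfp a haK b hbK
    · have hbK : b ∉ K := hdisj b hbB
      simp only [hgdef, if_pos haK, if_neg hbK]
      have := hub b hbB a haK
      calc ‖f a - p‖ = ‖p - f a‖ := norm_sub_rev _ _
        _ ≤ ‖b - a‖ - ε / 2 := this
        _ ≤ ‖b - a‖ := by linarith
        _ = ‖a - b‖ := norm_sub_rev _ _
    · have haK : a ∉ K := hdisj a haB
      simp only [hgdef, if_neg haK, if_pos hbK]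
      have := hub a haB b hbK
      calc ‖p - f b‖ ≤ ‖a - b‖ - ε / 2 := this
        _ ≤ ‖a - b‖ := by linarith
    · have haK : a ∉ K := hdisj a haB
      have hbK : b ∉ K := hdisj b hbB
      simp only [hgdef, if_neg haK, if_neg hbK, sub_self, norm_zero]
      exact norm_nonneg _
  obtain ⟨H, hHlip, hHeq⟩ := kirszbraun (hKne.mono Set.subset_union_left) hglip
  refine ⟨ε / 2, by linarith, H, hHlip, ?_, ?_⟩
  · intro y hy
    have := hHeq (Set.mem_union_left _ hy)
    rw [this, hgdef]
    simp [hy]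
  · intro z hz
    have := hHeq (Set.mem_union_right _ hz)
    rw [this, hgdef]
    simp [hdisj z hz]

set_option maxHeartbeats 1000000 in
theorem stmt7 (n : ℕ) (K : Set (EuclideanSpace ℝ (Fin (n+1)))) (hK : IsCompact K)
    (f : EuclideanSpace ℝ (Fin (n+1)) → EuclideanSpace ℝ (Fin (n+1)))
    (hf : LipschitzOnWith 1 f K)
    (hb : ∀ x ∉ K, ∃ p : EuclideanSpace ℝ (Fin (n+1)), ∀ y ∈ K, ‖p - f y‖ < ‖x - y‖) :
    ∃ h : EuclideanSpace ℝ (Fin (n+1)) → EuclideanSpace ℝ (Fin (n+1)),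
      LipschitzWith 1 h ∧ Set.EqOn h f K ∧
      ∀ A : Set (EuclideanSpace ℝ (Fin (n+1))), IsCompact A → A ⊆ Kᶜ →
        ∃ L : NNReal, L < 1 ∧ LipschitzOnWith L h A := by
  classical
  rcases K.eq_empty_or_nonempty with rfl | hKne
  · refine ⟨fun _ => 0, (LipschitzWith.const 0).weaken zero_le_one, fun x hx => hx.elim,
      fun A hA hAsub => ⟨0, zero_lt_one, (LipschitzWith.const 0).lipschitzOnWith⟩⟩
  have hfp : ∀ a ∈ K, ∀ b ∈ K, ‖f a - f b‖ ≤ ‖a - b‖ := by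
    intro a ha b hb'
    have := lipschitzOnWith_iff_norm_sub_le.1 hf ha hb'
    simpa using this
  obtain ⟨y₀, hy₀⟩ := hKne
  have hKne : K.Nonempty := ⟨y₀, hy₀⟩
  -- extension data near each point of Kᶜ
  have hstep : ∀ x : ↥Kᶜ, ∃ p, ∃ r, 0 < r ∧
      ∃ H : EuclideanSpace ℝ (Fin (n+1)) → EuclideanSpace ℝ (Fin (n+1)),
        (∀ a b, ‖H a - H b‖ ≤ ‖a - b‖) ∧ Set.EqOn H f K ∧
        ∀ z ∈ closedBall (x : EuclideanSpace ℝ (Fin (n+1))) r, H z = p := by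
    intro x
    obtain ⟨p, hp⟩ := hb x x.2
    obtain ⟨r, hr, H, h1, h2, h3⟩ := ball_ext hK hKne hfp hf.continuousOn p hp
    exact ⟨p, r, hr, H, h1, h2, h3⟩
  choose pt rad hrad Hx hHlip hHeq hHconst using hstep
  obtain ⟨T, hTc, hTeq⟩ := TopologicalSpace.isOpen_iUnion_countable
    (fun x : ↥Kᶜ => ball (x : EuclideanSpace ℝ (Fin (n+1))) (rad x)) (fun x => isOpen_ball)
  have hcov : Kᶜ ⊆ ⋃ x ∈ T, ball (x : EuclideanSpace ℝ (Fin (n+1))) (rad x) := by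
    intro z hz
    rw [hTeq]
    exact Set.mem_iUnion.2 ⟨⟨z, hz⟩, mem_ball_self (hrad _)⟩
  obtain ⟨H₀, hH₀lip, hH₀eq⟩ := kirszbraun hKne hfp
  have hfam : ∃ (u : ℕ → EuclideanSpace ℝ (Fin (n+1)) → EuclideanSpace ℝ (Fin (n+1)))
      (U : ℕ → Set (EuclideanSpace ℝ (Fin (n+1)))),
      (∀ i a b, ‖u i a - u i b‖ ≤ ‖a - b‖) ∧ (∀ i, Set.EqOn (u i) f K) ∧
      (∀ i, IsOpen (U i)) ∧ (∀ i, ∀ a ∈ U i, ∀ b ∈ U i, u i a = u i b) ∧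
      (Kᶜ ⊆ ⋃ i, U i) := by
    rcases T.eq_empty_or_nonempty with rfl | hTne
    · refine ⟨fun _ => H₀, fun _ => ∅, fun i => hH₀lip, fun i => hH₀eq, fun i => isOpen_empty,
        fun i a ha => ha.elim, ?_⟩
      intro z hz
      have := hcov hz
      simpa using this
    · obtain ⟨e, he⟩ := hTc.exists_eq_range hTne
      refine ⟨fun i => Hx (e i), fun i => ball (e i : EuclideanSpace ℝ (Fin (n+1))) (rad (e i)),
        fun i => hHlip _, fun i => hHeq _, fun i => isOpen_ball, ?_, ?_⟩
      · intro i a ha b hb'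
        show Hx (e i) a = Hx (e i) b
        rw [hHconst (e i) a (ball_subset_closedBall ha),
          hHconst (e i) b (ball_subset_closedBall hb')]
      · intro z hz
        obtain ⟨x, hxT, hxball⟩ := Set.mem_iUnion₂.1 (hcov hz)
        rw [he] at hxT
        obtain ⟨i, rfl⟩ := hxT
        exact Set.mem_iUnion.2 ⟨i, hxball⟩
  obtain ⟨u, U, hulip, hueq, hUopen, huconst, hUcov⟩ := hfam
  -- weights
  have hw_pos : ∀ i : ℕ, (0:ℝ) < (1/2 : ℝ)^(i+1) := fun i => by positivity
  set w : ℕ → ℝ := fun i => (1/2 : ℝ)^(i+1) with hwdef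
  have hwp : ∀ i, 0 < w i := hw_pos
  have hw_eq : w = fun i => (1/2 : ℝ) * (1/2)^i := by
    funext i
    show (1/2 : ℝ)^(i+1) = 1/2 * (1/2)^i
    rw [pow_succ]; ring
  have hw_summable : Summable w := by
    rw [hw_eq]
    exact (summable_geometric_of_lt_one (by norm_num) (by norm_num)).mul_left _
  have hw_sum : ∑' i, w i = 1 := by
    rw [hw_eq, tsum_mul_left, tsum_geometric_of_lt_one (by norm_num) (by norm_num)]
    norm_num
  clear_value w
  -- the combination
  set h : EuclideanSpace ℝ (Fin (n+1)) → EuclideanSpace ℝ (Fin (n+1)) :=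
    fun z => ∑' i, w i • u i z with hhdef
  have hsumm : ∀ z, Summable (fun i => w i • u i z) := by
    intro z
    apply Summable.of_norm_bounded (g := fun i => w i * (‖z - y₀‖ + ‖f y₀‖))
      (hw_summable.mul_right _)
    intro i
    rw [norm_smul, Real.norm_eq_abs, abs_of_pos (hwp i)]
    apply mul_le_mul_of_nonneg_left _ (hwp i).le
    have hrw : u i z = (u i z - u i y₀) + u i y₀ := by abel
    calc ‖u i z‖ = ‖(u i z - u i y₀) + u i y₀‖ := by rw [← hrw]
      _ ≤ ‖u i z - u i y₀‖ + ‖u i y₀‖ := norm_add_le _ _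
      _ ≤ ‖z - y₀‖ + ‖f y₀‖ :=
          add_le_add (hulip i z y₀) (le_of_eq (congrArg norm (hueq i hy₀)))
  have hdiff : ∀ a b, h a - h b = ∑' i, w i • (u i a - u i b) := by
    intro a b
    rw [hhdef]
    simp only
    rw [← Summable.tsum_sub (hsumm a) (hsumm b)]
    congr 1; funext i; rw [smul_sub]
  have hnormsumm : ∀ a b, Summable (fun i => w i * ‖u i a - u i b‖) := by
    intro a b
    apply Summable.of_nonneg_of_le (fun i => mul_nonneg (hwp i).le (norm_nonneg _))
      (fun i => mul_le_mul_of_nonneg_left (hulip i a b) (hwp i).le)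
      (hw_summable.mul_right ‖a - b‖)
  have hnorm : ∀ a b, ‖h a - h b‖ ≤ ∑' i, w i * ‖u i a - u i b‖ := by
    intro a b
    rw [hdiff]
    have hfe : (fun i => ‖w i • (u i a - u i b)‖) = fun i => w i * ‖u i a - u i b‖ := by
      funext i; rw [norm_smul, Real.norm_eq_abs, abs_of_pos (hwp i)]
    have hns : Summable fun i => ‖w i • (u i a - u i b)‖ := by
      rw [hfe]; exact hnormsumm a b
    refine (norm_tsum_le_tsum_norm hns).trans_eq ?_
    rw [hfe]
  have hsummable_ite : ∀ (j : ℕ) (g : ℕ → ℝ), Summable g →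
      Summable (fun i => if i = j then 0 else g i) := by
    intro j g hg
    have h1 : Summable (fun i => if i = j then g i else 0) := by
      have : (fun i => if i = j then g i else 0) = fun i => if i = j then g j else 0 := by
        funext i; by_cases hij : i = j <;> simp [hij]
      rw [this]
      exact ⟨_, hasSum_ite_eq j (g j)⟩
    have h2 : (fun i => if i = j then 0 else g i) = fun i => g i - if i = j then g i else 0 := by
      funext i; by_cases hij : i = j <;> simp [hij]
    rw [h2]
    exact hg.sub h1
  have hwtail : ∀ j : ℕ, ∑' i, (if i = j then 0 else w i) = 1 - w j := by
    intro j
    have := Summable.tsum_eq_add_tsum_ite hw_summable j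
    rw [hw_sum] at this
    linarith
  have hsum_le : ∀ a b (j : ℕ) (c : ℝ), ‖u j a - u j b‖ ≤ c →
      ∑' i, w i * ‖u i a - u i b‖ ≤ (1 - w j) * ‖a - b‖ + w j * c := by
    intro a b j c hc
    rw [Summable.tsum_eq_add_tsum_ite (hnormsumm a b) j]
    have h1 : ∑' i, (if i = j then 0 else w i * ‖u i a - u i b‖)
        ≤ ∑' i, (if i = j then 0 else w i) * ‖a - b‖ := by
      apply Summable.tsum_le_tsum
      · intro i
        by_cases hij : i = j
        · simp [hij]
        · simp only [if_neg hij]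
          exact mul_le_mul_of_nonneg_left (hulip i a b) (hwp i).le
      · exact hsummable_ite j _ (hnormsumm a b)
      · have : (fun i => (if i = j then 0 else w i) * ‖a - b‖)
            = fun i => if i = j then 0 else w i * ‖a - b‖ := by
          funext i; by_cases hij : i = j <;> simp [hij]
        rw [this]
        exact hsummable_ite j _ (hw_summable.mul_right _)
    have h2 : ∑' i, (if i = j then 0 else w i) * ‖a - b‖ = (1 - w j) * ‖a - b‖ := by
      rw [tsum_mul_right, hwtail j]
    have h3 : w j * ‖u j a - u j b‖ ≤ w j * c := mul_le_mul_of_nonneg_left hc (hwp j).le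
    linarith
  have hlip : LipschitzWith 1 h := by
    apply LipschitzWith.of_dist_le_mul
    intro a b
    rw [dist_eq_norm, dist_eq_norm, NNReal.coe_one, one_mul]
    calc ‖h a - h b‖ ≤ ∑' i, w i * ‖u i a - u i b‖ := hnorm a b
      _ ≤ ∑' i, w i * ‖a - b‖ := Summable.tsum_le_tsum
          (fun i => mul_le_mul_of_nonneg_left (hulip i a b) (hwp i).le)
          (hnormsumm a b) (hw_summable.mul_right _)
      _ = ‖a - b‖ := by rw [tsum_mul_right, hw_sum, one_mul]
  have heq : Set.EqOn h f K := by
    intro z hz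
    rw [hhdef]
    simp only
    have hz' : ∀ i, u i z = f z := fun i => hueq i hz
    simp only [hz']
    rw [Summable.tsum_smul_const hw_summable, hw_sum, one_smul]
  have hstrict : ∀ a ∈ Kᶜ, ∀ b, a ≠ b → ‖h a - h b‖ < ‖a - b‖ := by
    intro a ha b hab
    obtain ⟨j, hj⟩ := Set.mem_iUnion.1 (hUcov ha)
    have hγ : Continuous fun t : ℝ => a + t • (b - a) := by fun_prop
    have hγ0 : Tendsto (fun t : ℝ => a + t • (b - a)) (𝓝 0) (𝓝 a) := by
      have := hγ.tendsto 0
      simpa using this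
    have hevmem : (fun t : ℝ => a + t • (b - a)) ⁻¹' (U j) ∈ 𝓝 (0:ℝ) :=
      hγ0 ((hUopen j).mem_nhds hj)
    obtain ⟨δ, hδ, hδsub⟩ := Metric.mem_nhds_iff.1 hevmem
    set t : ℝ := min (δ/2) (1/2) with htdef
    have ht : 0 < t := lt_min (by linarith) (by norm_num)
    have ht1 : t < 1 := lt_of_le_of_lt (min_le_right _ _) (by norm_num)
    have htδ : t < δ := lt_of_le_of_lt (min_le_left _ _) (by linarith)
    have hmem : a + t • (b - a) ∈ U j := by
      apply hδsub
      rw [mem_ball, Real.dist_eq, sub_zero, abs_of_pos ht]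
      exact htδ
    have hconst : u j (a + t • (b - a)) = u j a := huconst j _ hmem a hj
    have hbound : ‖u j a - u j b‖ ≤ (1 - t) * ‖a - b‖ := by
      rw [← hconst]
      calc ‖u j (a + t • (b - a)) - u j b‖ ≤ ‖(a + t • (b - a)) - b‖ := hulip j _ _
        _ = (1 - t) * ‖a - b‖ := by
            have hv : (a + t • (b - a)) - b = (1 - t) • (a - b) := by module
            rw [hv, norm_smul, Real.norm_eq_abs, abs_of_pos (by linarith)]
    have hpos : 0 < ‖a - b‖ := by
      rw [norm_pos_iff]
      exact sub_ne_zero.2 hab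
    calc ‖h a - h b‖ ≤ (1 - w j) * ‖a - b‖ + w j * ((1 - t) * ‖a - b‖) :=
          (hnorm a b).trans (hsum_le a b j _ hbound)
      _ < ‖a - b‖ := by nlinarith [mul_pos (mul_pos (hwp j) ht) hpos]
  refine ⟨h, hlip, heq, ?_⟩
  intro A hA hAsub
  by_contra hno
  push_neg at hno
  have hex : ∀ k : ℕ, ∃ a, a ∈ A ∧ ∃ b, b ∈ A ∧
      (1 - 1/((k:ℝ)+1)) * ‖a - b‖ < ‖h a - h b‖ := by
    intro k
    have hk1 : (0:ℝ) < (k:ℝ) + 1 := by positivity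
    have hL1 : (0:ℝ) ≤ 1 - 1/((k:ℝ)+1) := by
      have : (1:ℝ)/((k:ℝ)+1) ≤ 1 := by
        rw [div_le_one hk1]
        linarith [Nat.cast_nonneg (α := ℝ) k]
      linarith
    have hL : Real.toNNReal (1 - 1/((k:ℝ)+1)) < 1 := by
      rw [← Real.toNNReal_one, Real.toNNReal_lt_toNNReal_iff zero_lt_one]
      have : (0:ℝ) < 1/((k:ℝ)+1) := by positivity
      linarith
    have hnl := hno _ hL
    rw [lipschitzOnWith_iff_norm_sub_le] at hnl
    push_neg at hnl
    obtain ⟨a, ha, b, hb', hlt⟩ := hnl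
    refine ⟨a, ha, b, hb', ?_⟩
    rwa [Real.coe_toNNReal _ hL1] at hlt
  choose aseq haA bseq hbA hseq using hex
  obtain ⟨⟨a, b⟩, habmem, φ, hφ, htend⟩ := (hA.prod hA).tendsto_subseq
    (x := fun k => (aseq k, bseq k)) (fun k => Set.mk_mem_prod (haA k) (hbA k))
  have hta : Tendsto (fun k => aseq (φ k)) atTop (𝓝 a) :=
    (continuous_fst.tendsto _).comp htend
  have htb : Tendsto (fun k => bseq (φ k)) atTop (𝓝 b) :=
    (continuous_snd.tendsto _).comp htend
  have haA' : a ∈ A := habmem.1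
  have hbA' : b ∈ A := habmem.2
  have hdiv : Tendsto (fun k => (1:ℝ)/((φ k : ℝ) + 1)) atTop (𝓝 0) :=
    tendsto_one_div_add_atTop_nhds_zero_nat.comp hφ.tendsto_atTop
  by_cases hab : a = b
  · subst hab
    obtain ⟨j, hj⟩ := Set.mem_iUnion.1 (hUcov (hAsub haA'))
    have hevU : ∀ᶠ k in atTop, aseq (φ k) ∈ U j := hta ((hUopen j).mem_nhds hj)
    have hevV : ∀ᶠ k in atTop, bseq (φ k) ∈ U j := htb ((hUopen j).mem_nhds hj)
    have hevw : ∀ᶠ k in atTop, (1:ℝ)/((φ k : ℝ) + 1) < w j :=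
      hdiv.eventually_lt_const (hwp j)
    obtain ⟨k, ⟨hk1, hk2⟩, hk3⟩ := ((hevU.and hevV).and hevw).exists
    have hne : aseq (φ k) ≠ bseq (φ k) := by
      intro heqq
      have := hseq (φ k)
      rw [heqq] at this
      simp at this
    have hpos : 0 < ‖aseq (φ k) - bseq (φ k)‖ := by
      rw [norm_pos_iff]; exact sub_ne_zero.2 hne
    have hc : u j (aseq (φ k)) = u j (bseq (φ k)) := huconst j _ hk1 _ hk2
    have hb0 : ‖u j (aseq (φ k)) - u j (bseq (φ k))‖ ≤ 0 := by
      rw [hc, sub_self, norm_zero]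
    have h1 : ‖h (aseq (φ k)) - h (bseq (φ k))‖
        ≤ (1 - w j) * ‖aseq (φ k) - bseq (φ k)‖ + w j * 0 :=
      (hnorm _ _).trans (hsum_le _ _ j 0 hb0)
    have h2 := hseq (φ k)
    have h3 : (1 - w j) * ‖aseq (φ k) - bseq (φ k)‖
        < (1 - 1/((φ k : ℝ)+1)) * ‖aseq (φ k) - bseq (φ k)‖ := by
      apply mul_lt_mul_of_pos_right _ hpos
      linarith
    linarith
  · have hlim1 : Tendsto (fun k => (1 - 1/((φ k : ℝ) + 1)) * ‖aseq (φ k) - bseq (φ k)‖)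
        atTop (𝓝 (1 * ‖a - b‖)) := by
      apply Tendsto.mul
      · have h5 : Tendsto (fun k : ℕ => (1:ℝ) - 1/((φ k : ℝ) + 1)) atTop (𝓝 (1 - 0)) :=
          Filter.Tendsto.sub tendsto_const_nhds hdiv
        simpa using h5
      · exact (hta.sub htb).norm
    have hlim2 : Tendsto (fun k => ‖h (aseq (φ k)) - h (bseq (φ k))‖) atTop
        (𝓝 ‖h a - h b‖) :=
      (((hlip.continuous.tendsto a).comp hta).sub ((hlip.continuous.tendsto b).comp htb)).norm
    have hle : 1 * ‖a - b‖ ≤ ‖h a - h b‖ :=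
      le_of_tendsto_of_tendsto' hlim1 hlim2 (fun k => (hseq (φ k)).le)
    rw [one_mul] at hle
    have := hstrict a (hAsub haA') b hab
    linarith
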